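/- If Σ_{k=0}^∞ Π_{j=0}^k a_j = ∞ (which forces a_k ↑ 1 as k → ∞), then almost surely there exists an integer s ≤ 0 such that K(U_j) ≤ j − s for every integer j with s ≤ j ≤ 0; i.e. τ_0 := sup{s ≤ 0 : K(U_j) ≤ j − s for all s ≤ j ≤ 0} > −∞ almost surely. -/

import Mathlib

open MeasureTheory ENNReal

section helpers
open ProbabilityTheory Set

private lemma klem (a : ℕ → ℝ) (hmono : Monotone a) (K : ℝ → ℕ∞)
    (hK : ∀ u : ℝ, K u = sInf ((fun k : ℕ => (k : ℕ∞)) '' {k : ℕ | u < a k}))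
    (u : ℝ) (m : ℕ) : K u ≤ (m : ℕ∞) ↔ u < a m := by
  rw [hK]
  constructor
  · intro h
    by_contra hlt
    push_neg at hlt
    have hS : ∀ x ∈ ((fun k : ℕ => (k:ℕ∞)) '' {k | u < a k}), ((m+1 : ℕ) : ℕ∞) ≤ x := by
      rintro x ⟨k, hk, rfl⟩
      have hk' : ¬ k ≤ m := fun hle => absurd hk (not_lt.2 ((hmono hle).trans hlt))
      simp only []
      exact_mod_cast Nat.succ_le_of_lt (not_le.1 hk')
    have h2 := (le_sInf hS).trans h
    have : m + 1 ≤ m := by exact_mod_cast h2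
    omega
  · intro h
    exact sInf_le ⟨m, h, rfl⟩

private lemma exists_gt (a : ℕ → ℝ)
    (hdiv : ∑' k : ℕ, ∏ j ∈ Finset.range (k + 1), ENNReal.ofReal (a j) = ⊤)
    (u : ℝ) (hu : u < 1) : ∃ k, u < a k := by
  by_contra h
  push_neg at h
  have hr : ENNReal.ofReal u < 1 := by
    rw [← ENNReal.ofReal_one]
    exact ENNReal.ofReal_lt_ofReal_iff one_pos |>.2 hu
  have hb : ∀ k, ∏ j ∈ Finset.range (k+1), ENNReal.ofReal (a j) ≤ ENNReal.ofReal u ^ (k+1) := by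
    intro k
    calc ∏ j ∈ Finset.range (k+1), ENNReal.ofReal (a j)
        ≤ ∏ _j ∈ Finset.range (k+1), ENNReal.ofReal u :=
          Finset.prod_le_prod' (fun j _ => ENNReal.ofReal_le_ofReal (h j))
      _ = ENNReal.ofReal u ^ (k+1) := by rw [Finset.prod_const, Finset.card_range]
  have hge : (⊤:ℝ≥0∞) ≤ ∑' k:ℕ, ENNReal.ofReal u ^ (k+1) := hdiv ▸ ENNReal.tsum_le_tsum hb
  have hlt : ∑' k:ℕ, ENNReal.ofReal u ^ (k+1) < ⊤ := by
    have h1 : ∀ k:ℕ, ENNReal.ofReal u ^ (k+1) ≤ ENNReal.ofReal u ^ k := by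
      intro k
      rw [pow_succ]
      calc ENNReal.ofReal u ^ k * ENNReal.ofReal u ≤ ENNReal.ofReal u ^ k * 1 :=
          mul_le_mul_right hr.le _
        _ = ENNReal.ofReal u ^ k := mul_one _
    calc ∑' k:ℕ, ENNReal.ofReal u ^ (k+1) ≤ ∑' k:ℕ, ENNReal.ofReal u ^ k :=
        ENNReal.tsum_le_tsum h1
      _ = (1 - ENNReal.ofReal u)⁻¹ := ENNReal.tsum_geometric _
      _ < ⊤ := ENNReal.inv_lt_top.2 (tsub_pos_of_lt hr)
  exact absurd (lt_of_le_of_lt hge hlt) (lt_irrefl _)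

variable {Ω : Type*} [mΩ : MeasurableSpace Ω] (P : Measure Ω) [IsProbabilityMeasure P]
    (U : ℤ → Ω → ℝ) (hUmeas : ∀ i, Measurable (U i))
    (hIndep : ProbabilityTheory.iIndepFun U P)
    (hUnif : ∀ i, Measure.map (U i) P = volume.restrict (Set.Ico (0 : ℝ) 1))
    (a : ℕ → ℝ) (ha01 : ∀ k, a k ∈ Set.Icc (0 : ℝ) 1)

include hUmeas hIndep hUnif in
private lemma prodF (F : Finset ℕ) (B : ℕ → Set ℝ) (hB : ∀ n, MeasurableSet (B n)) :
    P (⋂ n ∈ F, (fun ω => U (-(n:ℤ)) ω) ⁻¹' B n)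
      = ∏ n ∈ F, (volume.restrict (Set.Ico (0 : ℝ) 1)) (B n) := by
  classical
  have h1 : P (⋂ z ∈ F.image (fun n : ℕ => -(n:ℤ)), U z ⁻¹' B z.natAbs)
      = ∏ z ∈ F.image (fun n : ℕ => -(n:ℤ)), P (U z ⁻¹' B z.natAbs) :=
    hIndep.meas_biInter (fun z _ => ⟨B z.natAbs, hB _, rfl⟩)
  have hinj : ∀ x ∈ F, ∀ y ∈ F, -(x:ℤ) = -(y:ℤ) → x = y := by
    intro x _ y _ h; exact_mod_cast neg_inj.1 h
  rw [Finset.set_biInter_finset_image, Finset.prod_image hinj] at h1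
  simp only [Int.natAbs_neg, Int.natAbs_natCast] at h1
  rw [h1]
  refine Finset.prod_congr rfl fun n _ => ?_
  rw [← hUnif (-(n:ℤ)), Measure.map_apply (hUmeas _) (hB n)]

private lemma singleF (c : ℝ) (h1 : c ≤ 1) :
    (volume.restrict (Set.Ico (0 : ℝ) 1)) (Set.Iio c) = ENNReal.ofReal c := by
  rw [Measure.restrict_apply measurableSet_Iio]
  have heq : Set.Iio c ∩ Set.Ico (0:ℝ) 1 = Set.Ico 0 c := by
    ext x
    simp only [Set.mem_inter_iff, Set.mem_Iio, Set.mem_Ico]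
    constructor
    · rintro ⟨h, h', _⟩; exact ⟨h', h⟩
    · rintro ⟨hx0, hxc⟩; exact ⟨hxc, hx0, lt_of_lt_of_le hxc h1⟩
  rw [heq, Real.volume_Ico, sub_zero]

include hUmeas hIndep hUnif in
private lemma mapTuple (t L : ℕ) :
    Measure.map (fun ω (i : Fin L) => U (-((t + 1 + (i:ℕ) : ℕ):ℤ)) ω) P
      = Measure.pi (fun _ : Fin L => volume.restrict (Set.Ico (0 : ℝ) 1)) := by
  classical
  haveI : IsProbabilityMeasure (volume.restrict (Set.Ico (0 : ℝ) 1)) :=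
    ⟨by simp [Real.volume_Ico]⟩
  refine (Measure.pi_eq fun s hs => ?_).symm
  have hmeas : Measurable (fun ω (i : Fin L) => U (-((t + 1 + (i:ℕ) : ℕ):ℤ)) ω) :=
    measurable_pi_lambda _ fun i => hUmeas _
  rw [Measure.map_apply hmeas (MeasurableSet.univ_pi hs)]
  set B : ℕ → Set ℝ := fun n => if h : n - (t+1) < L then s ⟨n - (t+1), h⟩ else Set.univ
    with hBdef
  have hBmeas : ∀ n, MeasurableSet (B n) := by
    intro n
    by_cases h : n - (t+1) < L
    · simpa [hBdef, h] using hs _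
    · simp [hBdef, h]
  have hBval : ∀ i : Fin L, B (t + 1 + (i:ℕ)) = s i := by
    intro i
    have h : t + 1 + (i:ℕ) - (t+1) = (i:ℕ) := by omega
    simp only [hBdef, h, i.isLt, dif_pos, Fin.eta]
  have hpre : (fun ω (i : Fin L) => U (-((t + 1 + (i:ℕ) : ℕ):ℤ)) ω) ⁻¹' (Set.univ.pi s)
      = ⋂ n ∈ (Finset.univ : Finset (Fin L)).image (fun i : Fin L => t + 1 + (i:ℕ)),
          (fun ω => U (-(n:ℤ)) ω) ⁻¹' B n := by
    ext ω
    simp only [Set.mem_preimage, Set.mem_univ_pi, Finset.set_biInter_finset_image,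
      Set.mem_iInter, Finset.mem_univ, forall_const]
    constructor
    · intro h i; rw [hBval i]; exact h i
    · intro h i; have := h i; rwa [hBval i] at this
  rw [hpre, prodF P U hUmeas hIndep hUnif _ B hBmeas,
    Finset.prod_image (by intro x _ y _ h; simp only at h; exact Fin.ext (by omega))]
  exact Finset.prod_congr rfl fun i _ => by rw [hBval i]

private def DSset (U : ℤ → Ω → ℝ) (a : ℕ → ℝ) (t r : ℕ) : Set Ω :=
  ⋂ i ∈ Finset.Icc 1 r, (fun ω => U (-((t+i : ℕ):ℤ)) ω) ⁻¹' Set.Iio (a (r - i))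

private def NDset (U : ℤ → Ω → ℝ) (a : ℕ → ℝ) (t L : ℕ) : Set Ω :=
  ⋂ r ∈ Finset.Icc 1 L, (DSset U a t r)ᶜ

private def BLset (a : ℕ → ℝ) (L : ℕ) : Set (Fin (L+1) → ℝ) :=
  ⋂ r ∈ Finset.Icc 1 L, (⋂ i ∈ Finset.Icc 1 r,
    {x : Fin (L+1) → ℝ | x ⟨(i-1) % (L+1), Nat.mod_lt _ (Nat.succ_pos L)⟩ < a (r - i)})ᶜ

omit [MeasurableSpace Ω] in
private lemma BLmeas (L : ℕ) : MeasurableSet (BLset a L) := by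
  refine MeasurableSet.iInter fun r => MeasurableSet.iInter fun _ => ?_
  refine (MeasurableSet.iInter fun i => MeasurableSet.iInter fun _ => ?_).compl
  exact measurableSet_lt (measurable_pi_apply _) measurable_const

private lemma NDpre (t L : ℕ) :
    NDset U a t L
      = (fun ω (j : Fin (L+1)) => U (-((t + 1 + (j:ℕ) : ℕ):ℤ)) ω) ⁻¹' (BLset a L) := by
  unfold NDset BLset
  simp only [Set.preimage_iInter, Set.preimage_compl]
  refine Set.iInter_congr fun r => Set.iInter_congr fun hr => ?_
  congr 1
  unfold DSset
  refine Set.iInter_congr fun i => Set.iInter_congr fun hi => ?_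
  have h1 : 1 ≤ i ∧ i ≤ r := Finset.mem_Icc.1 hi
  have h2 : r ≤ L := (Finset.mem_Icc.1 hr).2
  have hidx : t + 1 + ((i-1) % (L+1)) = t + i := by
    rw [Nat.mod_eq_of_lt (by omega)]; omega
  ext ω
  simp only [Set.mem_preimage, Set.mem_setOf_eq, Set.mem_Iio, hidx]

include hUmeas hIndep hUnif in
private lemma NDinv (t L : ℕ) : P (NDset U a t L) = P (NDset U a 0 L) := by
  have hm : ∀ t : ℕ, Measurable (fun ω (j : Fin (L+1)) => U (-((t + 1 + (j:ℕ) : ℕ):ℤ)) ω) :=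
    fun t => measurable_pi_lambda _ fun j => hUmeas _
  rw [NDpre, NDpre,
    ← Measure.map_apply (hm t) (BLmeas a L), ← Measure.map_apply (hm 0) (BLmeas a L),
    mapTuple P U hUmeas hIndep hUnif t (L+1), mapTuple P U hUmeas hIndep hUnif 0 (L+1)]

private def workset (U : ℤ → Ω → ℝ) (a : ℕ → ℝ) (t : ℕ) : Set Ω :=
  ⋂ n ∈ Finset.range (t+1), (fun ω => U (-(n:ℤ)) ω) ⁻¹' Set.Iio (a (t - n))

include hUmeas hIndep hUnif ha01 in
private lemma Pwork (t : ℕ) :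
    P (workset U a t) = ∏ m ∈ Finset.range (t+1), ENNReal.ofReal (a m) := by
  unfold workset
  rw [prodF P U hUmeas hIndep hUnif _ _ (fun n => measurableSet_Iio)]
  rw [Finset.prod_congr rfl (fun n _ => singleF (a (t-n)) (ha01 _).2)]
  have := Finset.prod_range_reflect (fun m => ENNReal.ofReal (a m)) (t+1)
  simp only [Nat.add_sub_cancel] at this
  simpa using this

include hUmeas hIndep in
private lemma PworkND (t L : ℕ) :
    P (workset U a t ∩ NDset U a t L) = P (workset U a t) * P (NDset U a t L) := by
  set m : ℤ → MeasurableSpace Ω := fun z => MeasurableSpace.comap (U z) inferInstance with hm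
  have h_le : ∀ z, m z ≤ mΩ := fun z => (hUmeas z).comap_le
  set S : Set ℤ := {z : ℤ | -(t:ℤ) ≤ z} with hS
  set T : Set ℤ := {z : ℤ | z < -(t:ℤ)} with hT
  have hdisj : Disjoint S T := by
    rw [Set.disjoint_left]
    intro z hz1 hz2
    rw [hS, Set.mem_setOf_eq] at hz1
    rw [hT, Set.mem_setOf_eq] at hz2
    omega
  have hind : Indep (⨆ z ∈ S, m z) (⨆ z ∈ T, m z) P :=
    indep_iSup_of_disjoint h_le hIndep.iIndep hdisj
  have hw : MeasurableSet[⨆ z ∈ S, m z] (workset U a t) := by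
    refine MeasurableSet.iInter fun n => MeasurableSet.iInter fun hn => ?_
    have hn' : n ≤ t := by have := Finset.mem_range.1 hn; omega
    have hz : -(n:ℤ) ∈ S := by rw [hS, Set.mem_setOf_eq]; omega
    have hms : MeasurableSet[m (-(n:ℤ))] ((fun ω => U (-(n:ℤ)) ω) ⁻¹' Set.Iio (a (t - n))) :=
      ⟨Set.Iio (a (t - n)), measurableSet_Iio, rfl⟩
    exact le_iSup₂ (f := fun z (_ : z ∈ S) => m z) (-(n:ℤ)) hz _ hms
  have hnd : MeasurableSet[⨆ z ∈ T, m z] (NDset U a t L) := by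
    refine MeasurableSet.iInter fun r => MeasurableSet.iInter fun hr => ?_
    refine MeasurableSet.compl ?_
    refine MeasurableSet.iInter fun i => MeasurableSet.iInter fun hi => ?_
    have hi' : 1 ≤ i := (Finset.mem_Icc.1 hi).1
    have hz : -((t+i:ℕ):ℤ) ∈ T := by rw [hT, Set.mem_setOf_eq]; push_cast; omega
    have hms : MeasurableSet[m (-((t+i:ℕ):ℤ))]
        ((fun ω => U (-((t+i:ℕ):ℤ)) ω) ⁻¹' Set.Iio (a (r - i))) :=
      ⟨Set.Iio (a (r - i)), measurableSet_Iio, rfl⟩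
    exact le_iSup₂ (f := fun z (_ : z ∈ T) => m z) _ hz _ hms
  exact (Indep_iff _ _ _).1 hind _ _ hw hnd

end helpers


/-- Part (a) of Proposition "th0": let `(U_i)_{i∈ℤ}` be i.i.d. uniform on `[0,1)`,
`(a_k)` nondecreasing in `[0,1]` and `K(u) = inf{k : a_k > u}` (`∞` if no such `k`).
If `Σ_{k=0}^∞ Π_{j=0}^k a_j = ∞`, then almost surely
`τ_0 = sup{s ≤ 0 : K(U_j) ≤ j − s for all s ≤ j ≤ 0} > −∞`. -/
theorem stmt5 {Ω : Type*} [MeasurableSpace Ω] (P : Measure Ω) [IsProbabilityMeasure P]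
    (U : ℤ → Ω → ℝ) (hUmeas : ∀ i, Measurable (U i))
    (hIndep : ProbabilityTheory.iIndepFun U P)
    (hUnif : ∀ i, Measure.map (U i) P = volume.restrict (Set.Ico (0 : ℝ) 1))
    (a : ℕ → ℝ) (ha01 : ∀ k, a k ∈ Set.Icc (0 : ℝ) 1) (hmono : Monotone a)
    (K : ℝ → ℕ∞)
    (hK : ∀ u : ℝ, K u = sInf ((fun k : ℕ => (k : ℕ∞)) '' {k : ℕ | u < a k}))
    (hdiv : ∑' k : ℕ, ∏ j ∈ Finset.range (k + 1), ENNReal.ofReal (a j) = ⊤) :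
    ∀ᵐ ω ∂P, ∃ s : ℤ, s ≤ 0 ∧
      ∀ j : ℤ, s ≤ j → j ≤ 0 → K (U j ω) ≤ (((j - s).toNat : ℕ) : ℕ∞) := by
  classical
  -- membership characterizations
  have hwork_mem : ∀ t (ω : Ω), ω ∈ workset U a t ↔ ∀ n, n ≤ t → U (-(n:ℤ)) ω < a (t - n) := by
    intro t ω
    unfold workset
    simp [Set.mem_iInter, Finset.mem_range, Nat.lt_succ_iff]
  have hDS_mem : ∀ t r (ω : Ω),
      ω ∈ DSset U a t r ↔ ∀ i, 1 ≤ i → i ≤ r → U (-((t+i:ℕ):ℤ)) ω < a (r - i) := by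
    intro t r ω
    unfold DSset
    simp [Set.mem_iInter, Finset.mem_Icc, and_imp]
  have hND_mem : ∀ t L (ω : Ω),
      ω ∈ NDset U a t L ↔ ∀ r, 1 ≤ r → r ≤ L → ω ∉ DSset U a t r := by
    intro t L ω
    unfold NDset
    simp [Set.mem_iInter, Finset.mem_Icc, and_imp]
  -- measurability
  have hDSmeas : ∀ t r, MeasurableSet (DSset U a t r) := by
    intro t r
    exact MeasurableSet.iInter fun i => MeasurableSet.iInter fun _ =>
      (hUmeas _) measurableSet_Iio
  have hNDmeas : ∀ t L, MeasurableSet (NDset U a t L) :=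
    fun t L => MeasurableSet.iInter fun r => MeasurableSet.iInter fun _ => (hDSmeas t r).compl
  have hWmeas : ∀ t, MeasurableSet (workset U a t) :=
    fun t => MeasurableSet.iInter fun n => MeasurableSet.iInter fun _ =>
      (hUmeas _) measurableSet_Iio
  set p : ℕ → ℝ≥0∞ := fun t => ∏ m ∈ Finset.range (t+1), ENNReal.ofReal (a m) with hp
  have hND_anti : ∀ t L L', L ≤ L' → NDset U a t L' ⊆ NDset U a t L := by
    intro t L L' h ω hω
    rw [hND_mem] at hω ⊢
    intro r h1 h2
    exact hω r h1 (h2.trans h)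
  -- key inequality
  have key : ∀ T : ℕ, P (NDset U a 0 T) * ∑ t ∈ Finset.range (T+1), p t ≤ 1 := by
    intro T
    set E : ℕ → Set Ω := fun t => workset U a t ∩ NDset U a t (T - t) with hE
    have hdisj2 : ∀ t t', t < t' → t' ≤ T → Disjoint (E t) (E t') := by
      intro t t' hlt ht'
      rw [Set.disjoint_left]
      intro ω hω hω'
      have hwork' : ω ∈ workset U a t' := hω'.1
      have hnd : ω ∈ NDset U a t (T - t) := hω.2
      have hds : ω ∈ DSset U a t (t' - t) := by
        rw [hDS_mem]
        intro i hi1 hi2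
        have h3 := (hwork_mem t' ω).1 hwork' (t + i) (by omega)
        have h4 : t' - (t + i) = t' - t - i := by omega
        rwa [h4] at h3
      exact (hND_mem t (T-t) ω).1 hnd (t' - t) (by omega) (by omega) hds
    have hdisj : (↑(Finset.range (T+1)) : Set ℕ).PairwiseDisjoint E := by
      intro t ht t' ht' hne
      simp only [Finset.coe_range, Set.mem_Iio] at ht ht'
      rcases lt_or_gt_of_ne hne with hlt | hlt
      · exact hdisj2 t t' hlt (by omega)
      · exact (hdisj2 t' t hlt (by omega)).symm
    have hsum : ∑ t ∈ Finset.range (T+1), P (E t) = P (⋃ t ∈ Finset.range (T+1), E t) :=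
      (measure_biUnion_finset hdisj (fun t _ => (hWmeas t).inter (hNDmeas t (T-t)))).symm
    have hle1 : ∑ t ∈ Finset.range (T+1), P (E t) ≤ 1 := by
      rw [hsum]
      exact (measure_mono (Set.subset_univ _)).trans_eq measure_univ
    calc P (NDset U a 0 T) * ∑ t ∈ Finset.range (T+1), p t
        = ∑ t ∈ Finset.range (T+1), P (NDset U a 0 T) * p t := by
          rw [Finset.mul_sum]
      _ ≤ ∑ t ∈ Finset.range (T+1), P (E t) := by
          refine Finset.sum_le_sum fun t ht => ?_
          have h1 : P (E t) = p t * P (NDset U a t (T - t)) := by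
            show P (workset U a t ∩ NDset U a t (T - t)) = p t * P (NDset U a t (T - t))
            rw [PworkND P U hUmeas hIndep a t (T-t), Pwork P U hUmeas hIndep hUnif a ha01 t]
          rw [h1, mul_comm (P (NDset U a 0 T))]
          refine mul_le_mul_right ?_ _
          rw [NDinv P U hUmeas hIndep hUnif a t (T-t)]
          exact measure_mono (hND_anti 0 (T-t) T (by omega))
      _ ≤ 1 := hle1
  -- no delayed success has probability 0
  have NDall0 : ∀ t : ℕ, P (⋂ L, NDset U a t L) = 0 := by
    intro t
    by_contra hne
    have hεle : ∀ L, P (⋂ L, NDset U a t L) ≤ P (NDset U a 0 L) := fun L =>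
      (measure_mono (Set.iInter_subset _ L)).trans_eq (NDinv P U hUmeas hIndep hUnif a t L)
    have h1 : ∀ n, P (⋂ L, NDset U a t L) * ∑ t' ∈ Finset.range n, p t' ≤ 1 := by
      intro n
      match n with
      | 0 => simp
      | Nat.succ T => exact le_trans (mul_le_mul_left (hεle T) _) (key T)
    have h2 : P (⋂ L, NDset U a t L) * ⊤ ≤ 1 := by
      rw [← hdiv, ENNReal.tsum_eq_iSup_nat, ENNReal.mul_iSup]
      exact iSup_le h1
    rw [ENNReal.mul_top hne] at h2
    exact absurd h2 (by simp)
  -- almost sure events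
  have hae1 : ∀ᵐ ω ∂P, U 0 ω < 1 := by
    have hμ : P ((fun ω => U (0:ℤ) ω) ⁻¹' Set.Iio 1) = 1 := by
      rw [← Measure.map_apply (hUmeas 0) measurableSet_Iio, hUnif 0,
        Measure.restrict_apply measurableSet_Iio]
      have h : Set.Iio (1:ℝ) ∩ Set.Ico 0 1 = Set.Ico 0 1 := by
        ext x; simp only [Set.mem_inter_iff, Set.mem_Iio, Set.mem_Ico]; tauto
      rw [h, Real.volume_Ico]; simp
    rw [ae_iff]
    have h2 : {ω | ¬ U 0 ω < 1} = ((fun ω => U (0:ℤ) ω) ⁻¹' Set.Iio 1)ᶜ := by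
      ext ω; simp
    rw [h2]
    exact (prob_compl_eq_zero_iff ((hUmeas 0) measurableSet_Iio)).2 hμ
  have hae2 : ∀ᵐ ω ∂P, ∀ t : ℕ, ω ∉ ⋂ L, NDset U a t L := by
    refine ae_all_iff.2 fun t => ?_
    exact measure_eq_zero_iff_ae_notMem.mp (NDall0 t)
  filter_upwards [hae1, hae2] with ω h1 h2
  -- pointwise: delayed successes exist after every t
  have hDel : ∀ t : ℕ, ∃ r, 1 ≤ r ∧ ∀ i, 1 ≤ i → i ≤ r → U (-((t+i:ℕ):ℤ)) ω < a (r - i) := by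
    intro t
    have ht := h2 t
    rw [Set.mem_iInter] at ht
    push_neg at ht
    obtain ⟨L, hL⟩ := ht
    rw [hND_mem] at hL
    push_neg at hL
    obtain ⟨r, hr1, _, hr3⟩ := hL
    rw [hDS_mem] at hr3
    exact ⟨r, hr1, hr3⟩
  -- ladders of arbitrary length
  have lad : ∀ N : ℕ, ∃ t, N ≤ t ∧ ∀ i, 1 ≤ i → i ≤ t → U (-(i:ℤ)) ω < a (t - i) := by
    intro N
    induction N with
    | zero => exact ⟨0, le_refl 0, fun i h1' h2' => absurd (h1'.trans h2') (by omega)⟩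
    | succ N ih =>
      obtain ⟨t, hNt, hlad⟩ := ih
      obtain ⟨r, hr1, hDSr⟩ := hDel t
      refine ⟨t + r, by omega, ?_⟩
      intro i hi1 hi2
      by_cases hit : i ≤ t
      · exact lt_of_lt_of_le (hlad i hi1 hit) (hmono (by omega))
      · have h3 := hDSr (i - t) (by omega) (by omega)
        have h4 : t + (i - t) = i := by omega
        have h5 : r - (i - t) = t + r - i := by omega
        rwa [h4, h5] at h3
  -- conclude
  obtain ⟨k0, hk0⟩ := exists_gt a hdiv (U 0 ω) h1
  obtain ⟨t, hkt, hlad⟩ := lad k0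
  refine ⟨-(t:ℤ), by omega, ?_⟩
  intro j hsj hj0
  set n : ℕ := (-j).toNat with hn
  have hjn : j = -(n:ℤ) := by omega
  have hnt : n ≤ t := by omega
  have hVn : U (-(n:ℤ)) ω < a (t - n) := by
    rcases Nat.eq_zero_or_pos n with h0 | hpos
    · rw [h0]
      simp only [Nat.cast_zero, neg_zero, Nat.sub_zero]
      exact lt_of_lt_of_le hk0 (hmono hkt)
    · exact hlad n hpos hnt
  have hidx : (j - -(t:ℤ)).toNat = t - n := by omega
  rw [hidx, hjn]
  exact (klem a hmono K hK _ _).2 hVn
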